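/- arXiv:1911.01040 — 3 statements merged into one kernel-verified Lean document; each statement's English description precedes it below -/
import Mathlib

section
/- Let Σ, Σ' be p×p symmetric matrices and S ⊆ {1,...,p}. Suppose Σ is (φ₀, S)-compatible, i.e. for every vector v with ‖v_{S^c}‖₁ ≤ 3‖v_S‖₁ one has |S|·⟨v, Σv⟩ ≥ φ₀‖v‖₁². If the entrywise max-norm satisfies ‖Σ' − Σ‖_∞ ≤ φ₀/(32|S|), then Σ' is (φ₀/2, S)-compatible. -/
open Finset Matrix

/-- `(φ, S)`-compatibility of a symmetric matrix. -/
def IsCompatible {p : ℕ} (A : Matrix (Fin p) (Fin p) ℝ) (φ : ℝ) (S : Finset (Fin p)) : Prop :=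
  ∀ v : Fin p → ℝ, (∑ i ∈ Sᶜ, |v i|) ≤ 3 * ∑ i ∈ S, |v i| →
    φ * (∑ i, |v i|) ^ 2 ≤ (S.card : ℝ) * (v ⬝ᵥ A.mulVec v)

theorem stmt_0 {p : ℕ} (Sig Sig' : Matrix (Fin p) (Fin p) ℝ)
    (hSig : Sig.IsSymm) (hSig' : Sig'.IsSymm)
    (φ₀ : ℝ) (hφ : 0 < φ₀) (S : Finset (Fin p)) (hS : S.Nonempty)
    (hcompat : IsCompatible Sig φ₀ S)
    (hclose : ∀ i j, |Sig' i j - Sig i j| ≤ φ₀ / (32 * S.card)) :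
    IsCompatible Sig' (φ₀ / 2) S := by
  intro v hv
  have hcard : (0:ℝ) < S.card := by exact_mod_cast Finset.card_pos.mpr hS
  set c : ℝ := φ₀ / (32 * S.card) with hc
  have hc0 : 0 ≤ c := by positivity
  set N : ℝ := ∑ i, |v i| with hN
  have hN0 : 0 ≤ N := Finset.sum_nonneg fun i _ => abs_nonneg _
  have hdiff : v ⬝ᵥ Sig'.mulVec v - v ⬝ᵥ Sig.mulVec v
      = ∑ i, ∑ j, v i * ((Sig' i j - Sig i j) * v j) := by
    simp only [dotProduct, mulVec, Finset.mul_sum, ← Finset.sum_sub_distrib]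
    congr 1; ext i; congr 1; ext j; ring
  have key : |v ⬝ᵥ Sig'.mulVec v - v ⬝ᵥ Sig.mulVec v| ≤ c * N ^ 2 := by
    rw [hdiff]
    calc |∑ i, ∑ j, v i * ((Sig' i j - Sig i j) * v j)|
        ≤ ∑ i, |∑ j, v i * ((Sig' i j - Sig i j) * v j)| := Finset.abs_sum_le_sum_abs _ _
      _ ≤ ∑ i, ∑ j, |v i * ((Sig' i j - Sig i j) * v j)| :=
          Finset.sum_le_sum fun i _ => Finset.abs_sum_le_sum_abs _ _
      _ ≤ ∑ i, ∑ j, |v i| * (c * |v j|) := by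
          refine Finset.sum_le_sum fun i _ => Finset.sum_le_sum fun j _ => ?_
          rw [abs_mul, abs_mul]
          exact mul_le_mul_of_nonneg_left
            (mul_le_mul_of_nonneg_right (hclose i j) (abs_nonneg _)) (abs_nonneg _)
      _ = c * N ^ 2 := by
          simp only [← Finset.mul_sum, ← Finset.sum_mul, hN]
          ring
  have h1 : φ₀ * N ^ 2 ≤ (S.card : ℝ) * (v ⬝ᵥ Sig.mulVec v) := hcompat v hv
  have h2 : (S.card : ℝ) * (v ⬝ᵥ Sig.mulVec v) - (S.card : ℝ) * (c * N ^ 2)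
      ≤ (S.card : ℝ) * (v ⬝ᵥ Sig'.mulVec v) := by
    have := (abs_le.mp key).1
    nlinarith
  have hcN : (S.card : ℝ) * c = φ₀ / 32 := by
    rw [hc]; field_simp
  calc φ₀ / 2 * N ^ 2 ≤ φ₀ * N ^ 2 - φ₀ / 32 * N ^ 2 := by nlinarith
    _ ≤ (S.card : ℝ) * (v ⬝ᵥ Sig'.mulVec v) := by
        rw [← hcN] at *
        nlinarith
end

section
/- Fix μ ∈ (0,1), L > 0 and a standard basis vector e_a ∈ ℝ^p. Let Σ be a positive definite p×p matrix with ‖Σ^{−1}‖₁ ≤ L (maximum column ℓ₁ norm). Then the value f(Σ) = min{ mᵀΣm : ‖Σm − e_a‖_∞ ≤ μ, ‖m‖₁ ≤ L } satisfies (1−μ)²/λ_max(Σ) ≤ f(Σ) ≤ 1/λ_min(Σ). -/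
open Finset Matrix

/-- `f(Σ) = min { mᵀΣm : ‖Σm − e_a‖_∞ ≤ μ, ‖m‖₁ ≤ L }`. -/
noncomputable def fval {p : ℕ} (A : Matrix (Fin p) (Fin p) ℝ) (μ L : ℝ) (a : Fin p) : ℝ :=
  sInf { v : ℝ | ∃ m : Fin p → ℝ,
    (∀ i, |A.mulVec m i - (if i = a then (1 : ℝ) else 0)| ≤ μ) ∧ (∑ i, |m i|) ≤ L ∧
    v = m ⬝ᵥ A.mulVec m }

lemma cs_aux {p : ℕ} (A : Matrix (Fin p) (Fin p) ℝ) (hA : A.PosDef)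
    (hnn : ∀ v : Fin p → ℝ, 0 ≤ v ⬝ᵥ A.mulVec v) (x y : Fin p → ℝ) :
    (x ⬝ᵥ A.mulVec y) ^ 2 ≤ (y ⬝ᵥ A.mulVec y) * (x ⬝ᵥ A.mulVec x) := by
  have hT : Aᵀ = A := by
    have := hA.isHermitian.eq
    rwa [Matrix.conjTranspose_eq_transpose_of_trivial] at this
  have hAe : ∀ i j, A i j = A j i := by
    intro i j
    conv_lhs => rw [← hT]
    rfl
  have hsym : ∀ u v : Fin p → ℝ, u ⬝ᵥ A.mulVec v = v ⬝ᵥ A.mulVec u := by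
    intro u v
    simp only [dotProduct, Matrix.mulVec, Finset.mul_sum]
    rw [Finset.sum_comm]
    refine Finset.sum_congr rfl fun i _ => Finset.sum_congr rfl fun j _ => ?_
    rw [hAe i j]; ring
  have key : ∀ t : ℝ, 0 ≤ (y ⬝ᵥ A.mulVec y) * (t * t) + (2 * (x ⬝ᵥ A.mulVec y)) * t
      + (x ⬝ᵥ A.mulVec x) := by
    intro t
    have h0 := hnn (x + t • y)
    have hexp : (x + t • y) ⬝ᵥ A.mulVec (x + t • y)
        = (y ⬝ᵥ A.mulVec y) * (t * t) + (2 * (x ⬝ᵥ A.mulVec y)) * t + (x ⬝ᵥ A.mulVec x) := by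
      simp only [Matrix.mulVec_add, Matrix.mulVec_smul, add_dotProduct,
        dotProduct_add, smul_dotProduct, dotProduct_smul,
        smul_eq_mul, hsym y x]
      ring
    linarith [hexp ▸ h0]
  have := discrim_le_zero key
  rw [discrim] at this
  nlinarith

theorem stmt_4 {p : ℕ} (A : Matrix (Fin p) (Fin p) ℝ) (hA : A.PosDef)
    (μ L : ℝ) (hμ0 : 0 < μ) (hμ1 : μ < 1) (hL : 0 < L) (a : Fin p)
    (hinv : ∀ j, ∑ i, |A⁻¹ i j| ≤ L)
    (lmin lmax : ℝ) (hlminpos : 0 < lmin)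
    (hlmin : ∀ v : Fin p → ℝ, lmin * ∑ i, (v i) ^ 2 ≤ v ⬝ᵥ A.mulVec v)
    (hlmax : ∀ v : Fin p → ℝ, v ⬝ᵥ A.mulVec v ≤ lmax * ∑ i, (v i) ^ 2) :
    (1 - μ) ^ 2 / lmax ≤ fval A μ L a ∧ fval A μ L a ≤ 1 / lmin := by
  have hnn : ∀ v : Fin p → ℝ, 0 ≤ v ⬝ᵥ A.mulVec v := by
    intro v
    refine le_trans ?_ (hlmin v)
    positivity
  -- lmax > 0
  have hlmaxpos : 0 < lmax := by
    have h1 := hlmin (fun i : Fin p => if i = a then (1 : ℝ) else 0)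
    have h2 := hlmax (fun i : Fin p => if i = a then (1 : ℝ) else 0)
    have hs : ∑ i, ((fun i : Fin p => if i = a then (1:ℝ) else 0) i) ^ 2 = 1 := by
      simp
    rw [hs] at h1 h2
    nlinarith
  -- the witness m₀ = A⁻¹ e_a
  set m₀ : Fin p → ℝ := fun j => A⁻¹ j a with hm₀
  have hAinv : A * A⁻¹ = 1 := Matrix.mul_nonsing_inv A (isUnit_iff_ne_zero.mpr hA.det_pos.ne')
  have hAm₀ : A.mulVec m₀ = fun i => if i = a then (1 : ℝ) else 0 := by
    funext i
    have : (A * A⁻¹) i a = (1 : Matrix (Fin p) (Fin p) ℝ) i a := by rw [hAinv]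
    simp only [Matrix.mul_apply, Matrix.one_apply] at this
    simpa [Matrix.mulVec, dotProduct, hm₀] using this
  have hval₀ : m₀ ⬝ᵥ A.mulVec m₀ = m₀ a := by
    rw [hAm₀]
    simp [dotProduct]
  -- membership
  have hmem : (m₀ ⬝ᵥ A.mulVec m₀) ∈ { v : ℝ | ∃ m : Fin p → ℝ,
      (∀ i, |A.mulVec m i - (if i = a then (1 : ℝ) else 0)| ≤ μ) ∧ (∑ i, |m i|) ≤ L ∧
      v = m ⬝ᵥ A.mulVec m } := by
    refine ⟨m₀, ?_, ?_, rfl⟩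
    · intro i
      rw [hAm₀]
      simpa using hμ0.le
    · simpa [hm₀] using hinv a
  have hne : { v : ℝ | ∃ m : Fin p → ℝ,
      (∀ i, |A.mulVec m i - (if i = a then (1 : ℝ) else 0)| ≤ μ) ∧ (∑ i, |m i|) ≤ L ∧
      v = m ⬝ᵥ A.mulVec m }.Nonempty := ⟨_, hmem⟩
  -- lower bound for every feasible value
  have hlb : ∀ v ∈ { v : ℝ | ∃ m : Fin p → ℝ,
      (∀ i, |A.mulVec m i - (if i = a then (1 : ℝ) else 0)| ≤ μ) ∧ (∑ i, |m i|) ≤ L ∧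
      v = m ⬝ᵥ A.mulVec m }, (1 - μ) ^ 2 / lmax ≤ v := by
    rintro v ⟨m, hfeas, -, rfl⟩
    set e : Fin p → ℝ := fun i => if i = a then (1 : ℝ) else 0 with he
    have hea : e ⬝ᵥ A.mulVec m = A.mulVec m a := by
      simp [he, dotProduct]
    have h1 : 1 - μ ≤ A.mulVec m a := by
      have h := hfeas a
      simp only [if_pos rfl] at h
      have h' := abs_le.mp h
      have := h'.1
      norm_num at this ⊢
      linarith
    have hAaa : e ⬝ᵥ A.mulVec e ≤ lmax := by
      have := hlmax e
      have hs : ∑ i, (e i) ^ 2 = 1 := by simp [he]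
      rw [hs, mul_one] at this
      exact this
    have hcs := cs_aux A hA hnn e m
    rw [hea] at hcs
    have h2 : (1 - μ) ^ 2 ≤ (A.mulVec m a) ^ 2 := by
      have h1μ : (0:ℝ) ≤ 1 - μ := by linarith
      nlinarith
    rw [div_le_iff₀ hlmaxpos]
    nlinarith [hnn m, mul_le_mul_of_nonneg_left hAaa (hnn m)]
  constructor
  · exact le_csInf hne hlb
  · -- upper bound: sInf ≤ value of witness ≤ 1/lmin
    have hbdd : BddBelow { v : ℝ | ∃ m : Fin p → ℝ,
        (∀ i, |A.mulVec m i - (if i = a then (1 : ℝ) else 0)| ≤ μ) ∧ (∑ i, |m i|) ≤ L ∧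
        v = m ⬝ᵥ A.mulVec m } := ⟨(1 - μ) ^ 2 / lmax, hlb⟩
    have h1 : fval A μ L a ≤ m₀ ⬝ᵥ A.mulVec m₀ := csInf_le hbdd hmem
    have h2 : m₀ ⬝ᵥ A.mulVec m₀ ≤ 1 / lmin := by
      rw [hval₀]
      have hnn0 : 0 ≤ m₀ a := by
        have := hnn m₀
        rwa [hval₀] at this
      have hq : lmin * (m₀ a) ^ 2 ≤ m₀ a := by
        have := hlmin m₀
        rw [hval₀] at this
        refine le_trans ?_ this
        have : (m₀ a) ^ 2 ≤ ∑ i, (m₀ i) ^ 2 :=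
          Finset.single_le_sum (fun i _ => sq_nonneg (m₀ i)) (Finset.mem_univ a)
        nlinarith
      rcases eq_or_lt_of_le hnn0 with h | h
      · rw [← h]; positivity
      · rw [le_div_iff₀ hlminpos]
        nlinarith
    exact h1.trans h2
end

section
/- Let Σ̂ be a p×p positive semidefinite matrix, μ > 0, and suppose Ω ∈ ℝ^{p×p} satisfies ‖Σ̂Ωe_a − e_a‖_∞ ≤ μ/2 for a fixed index a, with Ω symmetric. Let m be a minimizer of m ↦ (1/2)mᵀΣ̂m − ⟨m, e_a⟩ + μ‖m‖₁, and let ν = m − Ωe_a and S = supp(Ωe_a). Then ‖ν_{S^c}‖₁ ≤ 3‖ν_S‖₁. -/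
open Finset Matrix
open scoped Classical

theorem stmt_14 {p : ℕ} (Sig : Matrix (Fin p) (Fin p) ℝ) (hSig : Sig.PosSemidef)
    (μ : ℝ) (hμ : 0 < μ) (Om : Matrix (Fin p) (Fin p) ℝ) (hOm : Om.IsSymm) (a : Fin p)
    (hcol : ∀ i, |Sig.mulVec (fun j => Om j a) i - (if i = a then (1 : ℝ) else 0)| ≤ μ / 2)
    (m : Fin p → ℝ)
    (hm : ∀ m' : Fin p → ℝ,
      (1 / 2) * (m ⬝ᵥ Sig.mulVec m) - m a + μ * ∑ i, |m i|
        ≤ (1 / 2) * (m' ⬝ᵥ Sig.mulVec m') - m' a + μ * ∑ i, |m' i|) :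
    ∑ i ∈ (Finset.univ.filter (fun i => Om i a ≠ 0))ᶜ, |m i - Om i a|
      ≤ 3 * ∑ i ∈ Finset.univ.filter (fun i => Om i a ≠ 0), |m i - Om i a| := by
  set S : Finset (Fin p) := Finset.univ.filter (fun i => Om i a ≠ 0) with hS
  set w : Fin p → ℝ := fun i => Om i a with hw
  set ν : Fin p → ℝ := fun i => m i - Om i a with hν
  simp only [show ∀ i, m i - Om i a = ν i from fun _ => rfl]
  -- symmetry of Sig
  have hsym : ∀ i j, Sig i j = Sig j i := by
    intro i j
    have h := hSig.isHermitian
    have h2 := congrFun (congrFun h j) i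
    simpa [Matrix.conjTranspose_apply] using h2
  have hswap : ∀ x y : Fin p → ℝ, x ⬝ᵥ Sig.mulVec y = y ⬝ᵥ Sig.mulVec x := by
    intro x y
    simp only [dotProduct, mulVec, Finset.mul_sum]
    rw [Finset.sum_comm]
    refine Finset.sum_congr rfl fun i _ => Finset.sum_congr rfl fun j _ => ?_
    rw [hsym j i]; ring
  have hmfun : m = ν + w := by funext i; simp [hν, hw]
  have hopt := hm w
  rw [hmfun] at hopt
  simp only [mulVec_add, dotProduct_add, add_dotProduct, Pi.add_apply] at hopt
  have hswapwv := hswap w ν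
  -- key inequality
  have key : (1/2) * (ν ⬝ᵥ Sig.mulVec ν) + (ν ⬝ᵥ Sig.mulVec w - ν a)
      + μ * ∑ i, |ν i + w i| ≤ μ * ∑ i, |w i| := by linarith
  -- linear term bound
  have hlin : ν a - ν ⬝ᵥ Sig.mulVec w ≤ (μ/2) * ∑ i, |ν i| := by
    have h1 : ν a - ν ⬝ᵥ Sig.mulVec w
        = ∑ i, ν i * ((if i = a then (1:ℝ) else 0) - Sig.mulVec w i) := by
      simp only [mul_sub, Finset.sum_sub_distrib, dotProduct]
      congr 1
      simp [Finset.sum_ite_eq', mul_comm]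
    rw [h1, Finset.mul_sum]
    refine Finset.sum_le_sum fun i _ => ?_
    calc ν i * ((if i = a then (1:ℝ) else 0) - Sig.mulVec w i)
        ≤ |ν i * ((if i = a then (1:ℝ) else 0) - Sig.mulVec w i)| := le_abs_self _
      _ = |ν i| * |(if i = a then (1:ℝ) else 0) - Sig.mulVec w i| := abs_mul _ _
      _ ≤ |ν i| * (μ/2) := by
          refine mul_le_mul_of_nonneg_left ?_ (abs_nonneg _)
          rw [abs_sub_comm]
          exact hcol i
      _ = μ/2 * |ν i| := mul_comm _ _
  -- l1 bound
  have hwS : ∀ i ∈ Sᶜ, w i = 0 := by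
    intro i hi
    simp only [hS, Finset.mem_compl, Finset.mem_filter, Finset.mem_univ, true_and,
      not_not] at hi
    exact hi
  have hsplit : ∀ f : Fin p → ℝ, ∑ i, f i = ∑ i ∈ S, f i + ∑ i ∈ Sᶜ, f i :=
    fun f => (Finset.sum_add_sum_compl S f).symm
  have hl1 : ∑ i, |w i| - ∑ i, |ν i + w i|
      ≤ (∑ i ∈ S, |ν i|) - ∑ i ∈ Sᶜ, |ν i| := by
    rw [hsplit (fun i => |w i|), hsplit (fun i => |ν i + w i|)]
    have e1 : ∑ i ∈ Sᶜ, |w i| = 0 :=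
      Finset.sum_eq_zero fun i hi => by rw [hwS i hi, abs_zero]
    have e2 : ∑ i ∈ Sᶜ, |ν i + w i| = ∑ i ∈ Sᶜ, |ν i| :=
      Finset.sum_congr rfl fun i hi => by simp [hwS i hi]
    have e3 : ∑ i ∈ S, |w i| - ∑ i ∈ S, |ν i + w i| ≤ ∑ i ∈ S, |ν i| := by
      rw [← Finset.sum_sub_distrib]
      refine Finset.sum_le_sum fun i _ => ?_
      have := abs_sub_abs_le_abs_sub (w i) (ν i + w i)
      have h2 : |w i - (ν i + w i)| = |ν i| := by
        rw [show w i - (ν i + w i) = -ν i by ring, abs_neg]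
      linarith
    linarith
  have hq : 0 ≤ ν ⬝ᵥ Sig.mulVec ν := by
    have := hSig.dotProduct_mulVec_nonneg ν
    simpa using this
  have hN : ∑ i, |ν i| = ∑ i ∈ S, |ν i| + ∑ i ∈ Sᶜ, |ν i| := hsplit _
  have hfin : μ * (∑ i ∈ Sᶜ, |ν i|) ≤ μ * (3 * ∑ i ∈ S, |ν i|) := by nlinarith
  exact le_of_mul_le_mul_left hfin hμ
end
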